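/- Let M be a connected loopless matroid with more than one element, and let C be a circuit of M of maximum size. Then every circuit of the contraction M/C has size strictly less than |C|. -/

import Mathlib

open Set Matroid

variable {α : Type*}

/-- A circuit of a matroid: a minimally dependent subset of the ground set. -/
def Matroid.IsCircuit' (M : Matroid α) (C : Set α) : Prop :=
  C ⊆ M.E ∧ ¬ M.Indep C ∧ ∀ D ⊂ C, M.Indep D

/-- A matroid is loopless if no single element forms a circuit, i.e. every
singleton of the ground set is independent. -/
def Matroid.Loopless' (M : Matroid α) : Prop := ∀ e ∈ M.E, M.Indep {e}

/-- A matroid is connected if any two distinct elements of the ground set lie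
in a common circuit. -/
def Matroid.Connected' (M : Matroid α) : Prop :=
  ∀ e ∈ M.E, ∀ f ∈ M.E, e ≠ f → ∃ C, M.IsCircuit' C ∧ e ∈ C ∧ f ∈ C

/-- The contraction `M/C`, defined by duality: `M/C = (M✶ \ C)✶`. -/
def Matroid.contract' (M : Matroid α) (C : Set α) : Matroid α :=
  (M✶ ↾ (M.E \ C))✶

namespace Matroid

variable {M : Matroid α} {C D X Y Z I J K S : Set α} {e f x y z : α}

/-! ### Basic circuit lemmas -/

lemma IsCircuit'.subset_ground'' (h : M.IsCircuit' C) : C ⊆ M.E := h.1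

lemma IsCircuit'.dep' (h : M.IsCircuit' C) : ¬ M.Indep C := h.2.1

lemma IsCircuit'.ssubset_indep (h : M.IsCircuit' C) (hD : D ⊂ C) : M.Indep D := h.2.2 D hD

lemma IsCircuit'.nonempty (h : M.IsCircuit' C) : C.Nonempty := by
  rcases C.eq_empty_or_nonempty with h0 | h0
  · exact absurd (h0 ▸ M.empty_indep) h.dep'
  · exact h0

lemma IsCircuit'.eq_of_subset (hC : M.IsCircuit' C) (hD : M.IsCircuit' D) (hDC : D ⊆ C) :
    D = C := by
  by_contra hne
  exact hD.dep' (hC.ssubset_indep (ssubset_of_subset_of_ne hDC hne))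

lemma IsCircuit'.diff_singleton_indep (h : M.IsCircuit' C) (he : e ∈ C) :
    M.Indep (C \ {e}) :=
  h.ssubset_indep (sdiff_singleton_ssubset.mpr he)

/-- every dependent subset of the ground set of a finite matroid contains a circuit -/
lemma exists_circuit_subset_aux : ∀ (n : ℕ) (X : Set α), X.ncard ≤ n → X.Finite → X ⊆ M.E →
    ¬ M.Indep X → ∃ C, M.IsCircuit' C ∧ C ⊆ X := by
  intro n
  induction n with
  | zero =>
    intro X hn hfin hXE hdep
    rw [Nat.le_zero, Set.ncard_eq_zero hfin] at hn
    exact absurd (hn ▸ M.empty_indep) hdep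
  | succ n ih =>
    intro X hn hfin hXE hdep
    obtain h | h := em (∀ Y ⊂ X, M.Indep Y)
    · exact ⟨X, ⟨hXE, hdep, h⟩, Subset.rfl⟩
    · push_neg at h
      obtain ⟨Y, hYX, hYdep⟩ := h
      have hcard : Y.ncard ≤ n := by
        have := Set.ncard_lt_ncard hYX hfin
        omega
      obtain ⟨C, hC, hCY⟩ := ih Y hcard (hfin.subset hYX.subset) (hYX.subset.trans hXE) hYdep
      exact ⟨C, hC, hCY.trans hYX.subset⟩

lemma exists_circuit_subset (hfin : X.Finite) (hXE : X ⊆ M.E) (hdep : ¬ M.Indep X) :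
    ∃ C, M.IsCircuit' C ∧ C ⊆ X :=
  exists_circuit_subset_aux X.ncard X le_rfl hfin hXE hdep

lemma IsCircuit'.mem_closure_diff_singleton (h : M.IsCircuit' C) (he : e ∈ C) :
    e ∈ M.closure (C \ {e}) := by
  have hI := h.diff_singleton_indep he
  by_contra hcl
  have hind : M.Indep (insert e (C \ {e})) := by
    rw [hI.insert_indep_iff_of_notMem (by simp)]
    exact ⟨h.1 he, hcl⟩
  rw [insert_diff_singleton, insert_eq_of_mem he] at hind
  exact h.dep' hind

lemma exists_circuit_of_mem_closure (hfinE : M.E.Finite) (hS : S ⊆ M.E) (heS : e ∉ S)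
    (he : e ∈ M.closure S) : ∃ C, M.IsCircuit' C ∧ e ∈ C ∧ C ⊆ insert e S := by
  obtain ⟨I, hI⟩ := M.exists_isBasis S hS
  have he' : e ∈ M.closure I := by rw [hI.closure_eq_closure]; exact he
  have heI : e ∉ I := fun h => heS (hI.subset h)
  have hdep : ¬ M.Indep (insert e I) := by
    intro hind
    rw [hI.indep.insert_indep_iff_of_notMem heI] at hind
    exact hind.2 he'
  have heE : e ∈ M.E := M.mem_ground_of_mem_closure he
  obtain ⟨C, hC, hCsub⟩ := exists_circuit_subset
    (hfinE.subset (insert_subset heE hI.indep.subset_ground))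
    (insert_subset heE hI.indep.subset_ground) hdep
  refine ⟨C, hC, ?_, hCsub.trans (insert_subset_insert hI.subset)⟩
  by_contra heC
  exact hC.dep' (hI.indep.subset (fun w hw => by
    rcases hCsub hw with h | h
    · exact absurd (h ▸ hw) heC
    · exact h))

/-- Strong circuit elimination. -/
lemma strong_elimination (hfinE : M.E.Finite) (h1 : M.IsCircuit' Y) (h2 : M.IsCircuit' Z)
    (heY : e ∈ Y) (heZ : e ∈ Z) (hfY : f ∈ Y) (hfZ : f ∉ Z) :
    ∃ K, M.IsCircuit' K ∧ f ∈ K ∧ K ⊆ (Y ∪ Z) \ {e} := by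
  have hfe : f ≠ e := fun h => hfZ (h ▸ heZ)
  set S := (Y ∪ Z) \ {e, f} with hSdef
  have hSE : S ⊆ M.E := (diff_subset).trans (union_subset h1.1 h2.1)
  have hfS : f ∉ S := fun h => h.2 (by simp)
  have hcl_e : e ∈ M.closure S := by
    refine M.closure_subset_closure (show Z \ {e} ⊆ S from ?_) (h2.mem_closure_diff_singleton heZ)
    intro w hw
    exact ⟨Or.inr hw.1, by
      rintro (rfl | rfl)
      · exact hw.2 rfl
      · exact hfZ hw.1⟩
  have hcl_f : f ∈ M.closure S := by
    have h1' : Y \ {f} ⊆ insert e S := by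
      intro w hw
      by_cases hwe : w = e
      · exact hwe ▸ mem_insert _ _
      · exact Or.inr ⟨Or.inl hw.1, by rintro (rfl | rfl); exacts [hwe rfl, hw.2 rfl]⟩
    have := M.closure_subset_closure h1' (h1.mem_closure_diff_singleton hfY)
    rwa [closure_insert_eq_of_mem_closure hcl_e] at this
  obtain ⟨K, hK, hfK, hKsub⟩ := exists_circuit_of_mem_closure hfinE hSE hfS hcl_f
  refine ⟨K, hK, hfK, hKsub.trans ?_⟩
  intro w hw
  rcases hw with rfl | hw
  · exact ⟨Or.inl hfY, fun h => hfe h⟩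
  · exact ⟨hw.1, fun h => hw.2 (Or.inl h)⟩


/-- Transitivity of the circuit-connectivity relation (Oxley 4.1.2),
with the witness circuit inside the union. -/
lemma circuit_trans_aux (hfinE : M.E.Finite) : ∀ (n : ℕ) (C₁ C₂ : Set α) (a c : α),
    (C₁ ∪ C₂).ncard ≤ n → M.IsCircuit' C₁ → M.IsCircuit' C₂ → a ∈ C₁ → c ∈ C₂ →
    (C₁ ∩ C₂).Nonempty → ∃ Z, M.IsCircuit' Z ∧ a ∈ Z ∧ c ∈ Z ∧ Z ⊆ C₁ ∪ C₂ := by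
  intro n
  induction n with
  | zero =>
    intro C₁ C₂ a c hn h1 h2 ha hc hint
    have hfin : (C₁ ∪ C₂).Finite := hfinE.subset (union_subset h1.1 h2.1)
    rw [Nat.le_zero, Set.ncard_eq_zero hfin] at hn
    exact absurd (hn ▸ (Or.inl ha : a ∈ C₁ ∪ C₂)) (notMem_empty a)
  | succ n ih =>
    intro C₁ C₂ a c hn h1 h2 ha hc hint
    have hfinU : (C₁ ∪ C₂).Finite := hfinE.subset (union_subset h1.1 h2.1)
    by_cases hc1 : c ∈ C₁
    · exact ⟨C₁, h1, ha, hc1, subset_union_left⟩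
    by_cases ha2 : a ∈ C₂
    · exact ⟨C₂, h2, ha2, hc, subset_union_right⟩
    obtain ⟨h, hh1, hh2⟩ := hint
    -- first elimination: circuit C₃ with a ∈ C₃ ⊆ (C₁ ∪ C₂) \ {h}
    obtain ⟨C₃, hC₃, haC₃, hC₃sub⟩ :=
      strong_elimination hfinE h1 h2 hh1 hh2 ha (fun h' => ha2 h')
    have hC₃U : C₃ ⊆ C₁ ∪ C₂ := hC₃sub.trans diff_subset
    have hhC₃ : h ∉ C₃ := fun hh => (hC₃sub hh).2 rfl
    have hC₃C₂ : (C₃ ∩ C₂).Nonempty := by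
      by_contra hemp
      rw [not_nonempty_iff_eq_empty] at hemp
      have hsub : C₃ ⊆ C₁ := fun w hw => by
        rcases hC₃U hw with h' | h'
        · exact h'
        · exact (eq_empty_iff_forall_notMem.mp hemp w ⟨hw, h'⟩).elim
      have heq : C₃ = C₁ := h1.eq_of_subset hC₃ hsub
      exact hhC₃ (heq ▸ hh1)
    by_cases hcC₃ : c ∈ C₃
    · exact ⟨C₃, hC₃, haC₃, hcC₃, hC₃U⟩
    by_cases hsmall : (C₃ ∪ C₂).ncard < (C₁ ∪ C₂).ncard
    · obtain ⟨Z, hZ, haZ, hcZ, hZsub⟩ := ih C₃ C₂ a c (by omega) hC₃ h2 haC₃ hc hC₃C₂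
      exact ⟨Z, hZ, haZ, hcZ, hZsub.trans (union_subset hC₃U subset_union_right)⟩
    -- else C₃ ∪ C₂ = C₁ ∪ C₂
    push_neg at hsmall
    -- second elimination: circuit C₄ with c ∈ C₄ ⊆ (C₁ ∪ C₂) \ {h}
    obtain ⟨C₄, hC₄, hcC₄, hC₄sub⟩ :=
      strong_elimination hfinE h2 h1 hh2 hh1 hc hc1
    have hC₄U : C₄ ⊆ C₁ ∪ C₂ := by
      refine (hC₄sub.trans diff_subset).trans ?_
      rw [union_comm]
    have hhC₄ : h ∉ C₄ := fun hh => (hC₄sub hh).2 rfl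
    have hC₄C₁ : (C₄ ∩ C₁).Nonempty := by
      by_contra hemp
      rw [not_nonempty_iff_eq_empty] at hemp
      have hsub : C₄ ⊆ C₂ := fun w hw => by
        rcases hC₄U hw with h' | h'
        · exact (eq_empty_iff_forall_notMem.mp hemp w ⟨hw, h'⟩).elim
        · exact h'
      have heq : C₄ = C₂ := h2.eq_of_subset hC₄ hsub
      exact hhC₄ (heq ▸ hh2)
    by_cases haC₄ : a ∈ C₄
    · exact ⟨C₄, hC₄, haC₄, hcC₄, hC₄U⟩
    by_cases hsmall2 : (C₁ ∪ C₄).ncard < (C₁ ∪ C₂).ncard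
    · obtain ⟨Z, hZ, haZ, hcZ, hZsub⟩ := ih C₁ C₄ a c (by omega) h1 hC₄ ha hcC₄
        (by rwa [inter_comm] at hC₄C₁)
      exact ⟨Z, hZ, haZ, hcZ, hZsub.trans (union_subset subset_union_left hC₄U)⟩
    push_neg at hsmall2
    -- now C₄ ⊇ C₂ \ C₁
    have hC₄big : C₂ \ C₁ ⊆ C₄ := by
      have hEq : C₁ ∪ C₄ = C₁ ∪ C₂ :=
        Set.eq_of_subset_of_ncard_le (union_subset subset_union_left hC₄U) hsmall2 hfinU
      intro w hw
      rcases (hEq ▸ (Or.inr hw.1 : w ∈ C₁ ∪ C₂) : w ∈ C₁ ∪ C₄) with h' | h'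
      · exact absurd h' hw.2
      · exact h'
    have hC₃C₄ : (C₃ ∩ C₄).Nonempty := by
      by_contra hemp
      rw [not_nonempty_iff_eq_empty] at hemp
      have hsub : C₃ ⊆ C₁ := by
        intro w hw
        rcases hC₃U hw with h' | h'
        · exact h'
        · by_contra hw1
          exact (eq_empty_iff_forall_notMem.mp hemp w ⟨hw, hC₄big ⟨h', hw1⟩⟩).elim
      have heq : C₃ = C₁ := h1.eq_of_subset hC₃ hsub
      exact hhC₃ (heq ▸ hh1)
    have hUsub : C₃ ∪ C₄ ⊆ (C₁ ∪ C₂) \ {h} := by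
      refine union_subset hC₃sub ?_
      refine hC₄sub.trans ?_
      rw [union_comm]
    have hcard : (C₃ ∪ C₄).ncard ≤ n := by
      have h1' : (C₃ ∪ C₄).ncard ≤ ((C₁ ∪ C₂) \ {h}).ncard :=
        Set.ncard_le_ncard hUsub (hfinU.diff)
      have h2' : ((C₁ ∪ C₂) \ {h}).ncard < (C₁ ∪ C₂).ncard :=
        Set.ncard_diff_singleton_lt_of_mem (Or.inl hh1) hfinU
      omega
    obtain ⟨Z, hZ, haZ, hcZ, hZsub⟩ := ih C₃ C₄ a c hcard hC₃ hC₄ haC₃ hcC₄ hC₃C₄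
    exact ⟨Z, hZ, haZ, hcZ, hZsub.trans (union_subset hC₃U hC₄U)⟩

lemma circuit_trans (hfinE : M.E.Finite) (h1 : M.IsCircuit' C) (h2 : M.IsCircuit' D)
    (ha : a ∈ C) (hc : c ∈ D) (hint : (C ∩ D).Nonempty) :
    ∃ Z, M.IsCircuit' Z ∧ a ∈ Z ∧ c ∈ Z ∧ Z ⊆ C ∪ D :=
  circuit_trans_aux hfinE (C ∪ D).ncard C D a c le_rfl h1 h2 ha hc hint

/-- circuits of a restriction -/
lemma restrict_circuit_iff (hXE : X ⊆ M.E) :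
    (M ↾ X).IsCircuit' C ↔ M.IsCircuit' C ∧ C ⊆ X := by
  constructor
  · rintro ⟨hCsub, hCdep, hCmin⟩
    rw [restrict_ground_eq] at hCsub
    refine ⟨⟨hCsub.trans hXE, fun hind => hCdep (restrict_indep_iff.mpr ⟨hind, hCsub⟩), ?_⟩, hCsub⟩
    intro D hD
    exact ((hCmin D hD).of_restrict)
  · rintro ⟨⟨hCE, hCdep, hCmin⟩, hCX⟩
    refine ⟨by rwa [restrict_ground_eq], fun hind => hCdep hind.of_restrict, ?_⟩
    intro D hD
    exact restrict_indep_iff.mpr ⟨hCmin D hD, hD.subset.trans hCX⟩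

/-- Key separation lemma: if `Y'` is a circuit through `x`, and `z` is an element joined
to no element of `Y' \ {x}` by a circuit avoiding `x`, then `M` is not connected. -/
lemma genI (hfinE : M.E.Finite) (hconn : M.Connected') (hY' : M.IsCircuit' Y) (hx : x ∈ Y)
    (hYne : (Y \ {x}).Nonempty) (hz : z ∈ M.E) (hzx : z ≠ x) (hzY : z ∉ Y)
    (hsep : ∀ B, M.IsCircuit' B → x ∉ B → z ∈ B → ∀ w ∈ B, w ∉ Y \ {x}) : False := by
  obtain ⟨y, hy⟩ := hYne
  have hyz : y ≠ z := fun h => hzY (h ▸ hy.1)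
  obtain ⟨Z', hZ', hyZ', hzZ'⟩ := hconn y (hY'.1 hy.1) z hz hyz
  have hxZ' : x ∈ Z' := by
    by_contra hxZ'
    exact hsep Z' hZ' hxZ' hzZ' y hyZ' hy
  obtain ⟨K, hK, hzK, hKsub⟩ := strong_elimination hfinE hZ' hY' hxZ' hx hzZ' hzY
  have hxK : x ∉ K := fun h => (hKsub h).2 rfl
  have hKZ : K ⊆ Z' \ {x} := by
    intro w hw
    have hwx : w ≠ x := fun h => hxK (h ▸ hw)
    rcases (hKsub hw).1 with h' | h'
    · exact ⟨h', hwx⟩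
    · exact absurd ⟨h', hwx⟩ (hsep K hK hxK hzK w hw)
  exact hK.dep' (hZ'.ssubset_indep (hKZ.trans_ssubset (sdiff_singleton_ssubset.mpr hxZ')))


/-! ### Contraction -/

variable {J' B K' I' : Set α}

lemma contract'_ground' (M : Matroid α) (K : Set α) : (M.contract' K).E = M.E \ K := rfl

lemma contract'_indep_iff (hK : K ⊆ M.E) :
    (M.contract' K).Indep I ↔ I ⊆ M.E \ K ∧ ∃ J, M.IsBasis J K ∧ M.Indep (I ∪ J) := by
  rw [Matroid.contract', dual_indep_iff_exists']
  have hXE : M.E \ K ⊆ M✶.E := by rw [dual_ground]; exact diff_subset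
  rw [restrict_ground_eq]
  constructor
  · rintro ⟨hIsub, B, hB, hdisj⟩
    rw [isBase_restrict_iff hXE] at hB
    obtain ⟨B', hB', hBB'⟩ := hB.indep.exists_isBase_superset
    have hBeq : B' ∩ (M.E \ K) = B := by
      apply subset_antisymm
      · rintro w ⟨hwB', hwX⟩
        exact hB.mem_of_insert_indep hwX (hB'.indep.subset (insert_subset hwB' hBB'))
      · exact subset_inter hBB' hB.subset
    have hbasis : M✶.IsBasis (B' ∩ (M.E \ K)) (M.E \ K) := by rw [hBeq]; exact hB
    have hres := hB'.compl_inter_isBasis_of_inter_isBasis hbasis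
    rw [dual_dual, dual_ground, diff_diff_cancel_left hK] at hres
    refine ⟨hIsub, (M.E \ B') ∩ K, hres, ?_⟩
    have hBase : M.IsBase (M.E \ B') := hB'.compl_isBase_of_dual
    refine hBase.indep.subset (union_subset ?_ inter_subset_left)
    intro w hw
    refine ⟨(hIsub hw).1, fun hwB' => ?_⟩
    exact (disjoint_left.mp hdisj hw) (hBeq ▸ (⟨hwB', hIsub hw⟩ : w ∈ B' ∩ (M.E \ K)))
  · rintro ⟨hIsub, J, hJ, hIJ⟩
    obtain ⟨B₀, hB₀, hB₀sub⟩ := hIJ.exists_isBase_superset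
    have hJB₀ : J ⊆ B₀ := (subset_union_right).trans hB₀sub
    have hJeq : B₀ ∩ K = J := by
      apply subset_antisymm
      · rintro w ⟨hwB, hwK⟩
        exact hJ.mem_of_insert_indep hwK (hB₀.indep.subset (insert_subset hwB hJB₀))
      · exact subset_inter hJB₀ hJ.subset
    have hbasis : M.IsBasis (B₀ ∩ K) K := by rw [hJeq]; exact hJ
    have hdb := hB₀.compl_inter_isBasis_of_inter_isBasis hbasis
    refine ⟨hIsub, (M.E \ B₀) ∩ (M.E \ K), ?_, ?_⟩
    · rw [isBase_restrict_iff hXE]; exact hdb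
    · rw [disjoint_left]
      intro w hw hmem
      exact hmem.1.2 (hB₀sub (Or.inl hw))

lemma indep_union_basis_exchange (hfinE : M.E.Finite) (hIK : Disjoint I K)
    (hJ : M.IsBasis J K) (hJ' : M.IsBasis J' K) (h : M.Indep (I ∪ J)) : M.Indep (I ∪ J') := by
  have hIE : I ⊆ M.E := fun w hw => h.subset_ground (Or.inl hw)
  have hsub1 : I ∪ J ⊆ I ∪ K := union_subset_union_right _ hJ.subset
  have hIJ'E : I ∪ J' ⊆ M.E := union_subset hIE hJ'.left_subset_ground
  have hcl : I ∪ K ⊆ M.closure (I ∪ J) := by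
    intro w hw
    rcases hw with hw | hw
    · exact M.mem_closure_of_mem (Or.inl hw) h.subset_ground
    · exact M.closure_subset_closure subset_union_right (hJ.subset_closure hw)
  have h1 : M.IsBasis (I ∪ J) (I ∪ K) := h.isBasis_of_subset_of_subset_closure hsub1 hcl
  obtain ⟨B₁, hB₁⟩ := M.exists_isBasis (I ∪ J') hIJ'E
  have hcl' : I ∪ K ⊆ M.closure B₁ := by
    rw [hB₁.closure_eq_closure]
    intro w hw
    rcases hw with hw | hw
    · exact M.mem_closure_of_mem (Or.inl hw) hIJ'E
    · exact M.closure_subset_closure subset_union_right (hJ'.subset_closure hw)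
  have h2 : M.IsBasis B₁ (I ∪ K) := hB₁.indep.isBasis_of_subset_of_subset_closure
    (hB₁.subset.trans (union_subset_union_right _ hJ'.subset)) hcl'
  have hcard := h1.encard_eq_encard h2
  have hdisjJ : Disjoint I J := hIK.mono_right hJ.subset
  have hdisjJ' : Disjoint I J' := hIK.mono_right hJ'.subset
  have hcard2 : (I ∪ J').encard = B₁.encard := by
    rw [← hcard, encard_union_eq hdisjJ, encard_union_eq hdisjJ', hJ.encard_eq_encard hJ']
  have hfin : (I ∪ J').Finite := hfinE.subset hIJ'E
  have hBeq : B₁ = I ∪ J' :=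
    hfin.eq_of_subset_of_encard_le' hB₁.subset (le_of_eq hcard2)
  exact hBeq ▸ hB₁.indep

lemma contract'_indep_iff_forall (hfinE : M.E.Finite) (hK : K ⊆ M.E) :
    (M.contract' K).Indep I ↔ I ⊆ M.E \ K ∧ ∀ J, M.IsBasis J K → M.Indep (I ∪ J) := by
  rw [contract'_indep_iff hK]
  constructor
  · rintro ⟨hIsub, J, hJ, hIJ⟩
    refine ⟨hIsub, fun J' hJ' => ?_⟩
    have hdisj : Disjoint I K := disjoint_left.mpr (fun w hw => (hIsub hw).2)
    exact indep_union_basis_exchange hfinE hdisj hJ hJ' hIJ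
  · rintro ⟨hIsub, hall⟩
    obtain ⟨J, hJ⟩ := M.exists_isBasis K hK
    exact ⟨hIsub, J, hJ, hall J hJ⟩

/-! ### Single-element contractions -/

lemma contract'_singleton_indep_iff (hxE : x ∈ M.E) (hxi : M.Indep {x}) :
    (M.contract' {x}).Indep I ↔ I ⊆ M.E \ {x} ∧ M.Indep (insert x I) := by
  rw [contract'_indep_iff (by simpa using hxE)]
  constructor
  · rintro ⟨hIsub, J, hJ, hIJ⟩
    have hJx : J = {x} := by
      rcases (subset_singleton_iff_eq.mp hJ.subset) with h | h
      · exfalso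
        have hxcl : x ∈ M.closure ∅ := by
          have := hJ.subset_closure (mem_singleton x); rwa [h] at this
        have := M.empty_indep.insert_indep_iff_of_notMem (notMem_empty x)
        rw [insert_empty_eq] at this
        exact ((this.mp hxi).2 hxcl)
      · exact h
    refine ⟨hIsub, ?_⟩
    rw [hJx, union_singleton] at hIJ
    exact hIJ
  · rintro ⟨hIsub, hind⟩
    exact ⟨hIsub, {x}, hxi.isBasis_self, by rwa [union_singleton]⟩

lemma contract'_singleton_dep (hxE : x ∈ M.E) (hxi : M.Indep {x}) (hIsub : I ⊆ M.E \ {x})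
    (hdep : ¬ M.Indep (insert x I)) : ¬ (M.contract' {x}).Indep I := by
  rw [contract'_singleton_indep_iff hxE hxi]
  exact fun h => hdep h.2

/-- A circuit through x yields a circuit of M/x. -/
lemma circuit_contract_of_mem (hxE : x ∈ M.E) (hxi : M.Indep {x}) (hY : M.IsCircuit' Y)
    (hx : x ∈ Y) (hne : Y ≠ {x}) : (M.contract' {x}).IsCircuit' (Y \ {x}) := by
  refine ⟨?_, ?_, ?_⟩
  · rw [contract'_ground']
    exact diff_subset_diff_left hY.1
  · rw [contract'_singleton_indep_iff hxE hxi]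
    rintro ⟨-, hind⟩
    rw [insert_diff_singleton, insert_eq_of_mem hx] at hind
    exact hY.dep' hind
  · intro S hS
    rw [contract'_singleton_indep_iff hxE hxi]
    refine ⟨hS.subset.trans (diff_subset_diff_left hY.1), ?_⟩
    obtain ⟨w, hwY, hwS⟩ := exists_of_ssubset hS
    refine hY.ssubset_indep ⟨insert_subset hx (hS.subset.trans diff_subset), fun hYsub => ?_⟩
    exact hwS (by
      rcases hYsub hwY.1 with rfl | h
      · exact absurd rfl hwY.2
      · exact h)

/-- Every circuit of M/x lifts into M by possibly adding x. -/
lemma circuit_contract_lift (hfinE : M.E.Finite) (hxE : x ∈ M.E) (hxi : M.Indep {x})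
    (hI : (M.contract' {x}).IsCircuit' I) :
    ∃ Y, M.IsCircuit' Y ∧ I ⊆ Y ∧ Y ⊆ insert x I := by
  have hIsub : I ⊆ M.E \ {x} := by rw [← contract'_ground']; exact hI.1
  have hdep : ¬ M.Indep (insert x I) := by
    intro hind
    exact hI.dep' ((contract'_singleton_indep_iff hxE hxi).mpr ⟨hIsub, hind⟩)
  obtain ⟨Y, hY, hYsub⟩ := exists_circuit_subset
    (hfinE.subset (insert_subset hxE (hIsub.trans diff_subset)))
    (insert_subset hxE (hIsub.trans diff_subset)) hdep
  by_cases hxY : x ∈ Y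
  · -- Y \ {x} is a circuit of M/x contained in I, hence = I
    have hYI : Y \ {x} ⊆ I := fun w hw => by
      rcases hYsub hw.1 with rfl | h
      · exact absurd rfl hw.2
      · exact h
    have hYdep : ¬ (M.contract' {x}).Indep (Y \ {x}) := by
      rw [contract'_singleton_indep_iff hxE hxi]
      rintro ⟨-, hind⟩
      rw [insert_diff_singleton, insert_eq_of_mem hxY] at hind
      exact hY.dep' hind
    have hYeq : Y \ {x} = I := by
      by_contra hne
      exact hYdep (hI.ssubset_indep (ssubset_of_subset_of_ne hYI hne))
    refine ⟨Y, hY, ?_, ?_⟩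
    · rw [← hYeq]; exact diff_subset
    · rw [← hYeq, insert_diff_singleton]; exact subset_insert _ _
  · have hYI : Y ⊆ I := fun w hw => by
      rcases hYsub hw with rfl | h
      · exact absurd hw hxY
      · exact h
    have : Y = I := by
      by_contra hne
      have hYind := hI.ssubset_indep (ssubset_of_subset_of_ne hYI hne)
      rw [contract'_singleton_indep_iff hxE hxi] at hYind
      exact hY.dep' (hYind.2.subset (subset_insert _ _))
    exact ⟨Y, hY, this.symm.subset, this ▸ (subset_insert _ _)⟩


/-! ### The main induction: no "skew pair" configuration exists -/

lemma no_skew_pair : ∀ (n : ℕ) (M : Matroid α) (C D : Set α),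
    M.E.Finite → M.E.ncard ≤ n → M.Connected' →
    M.IsCircuit' C → M.IsCircuit' D → Disjoint C D →
    (∀ e ∈ C, ∀ f ∈ D, M.Indep ((C \ {e}) ∪ (D \ {f}))) →
    (∀ Y, M.IsCircuit' Y → Y.ncard ≤ C.ncard) →
    C.ncard ≤ D.ncard → False := by
  intro n
  induction n with
  | zero =>
    intro M C D hfinE hn hconn hC hD hdisj hskew hmax hcd
    obtain ⟨c0, hc0⟩ := hC.nonempty
    rw [Nat.le_zero, Set.ncard_eq_zero hfinE] at hn
    exact absurd (hn ▸ hC.1 hc0) (notMem_empty c0)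
  | succ n ih =>
    intro M C D hfinE hn hconn hC hD hdisj hskew hmax hcd
    obtain ⟨c0, hc0⟩ := hC.nonempty
    obtain ⟨d0, hd0⟩ := hD.nonempty
    have hc0E := hC.1 hc0
    have hd0E := hD.1 hd0
    have hc0d0 : c0 ≠ d0 := fun h => (disjoint_left.mp hdisj hc0) (h ▸ hd0)
    have hCfin : C.Finite := hfinE.subset hC.1
    have hDfin : D.Finite := hfinE.subset hD.1
    -- looplessness
    have hloopless : ∀ e ∈ M.E, M.Indep {e} := by
      intro e heE
      by_contra hdep
      obtain ⟨z, hzE, hze⟩ : ∃ z, z ∈ M.E ∧ z ≠ e := by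
        by_cases h : e = c0
        · exact ⟨d0, hd0E, fun hh => hc0d0 (h ▸ hh).symm⟩
        · exact ⟨c0, hc0E, fun hh => h hh.symm⟩
      obtain ⟨Z, hZ, heZ, hzZ⟩ := hconn e heE z hzE (fun h => hze h.symm)
      refine hdep (hZ.ssubset_indep ?_)
      refine ssubset_of_subset_of_ne (singleton_subset_iff.mpr heZ) (fun h => hze ?_)
      rw [← h] at hzZ
      exact hzZ
    -- circuits inside C ∪ D are C or D
    have hcross : ∀ Y, M.IsCircuit' Y → Y ⊆ C ∪ D → Y = C ∨ Y = D := by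
      intro Y hY hYsub
      by_contra hne
      push_neg at hne
      obtain ⟨e, heC, heY⟩ : ∃ e, e ∈ C ∧ e ∉ Y := by
        by_contra h; push_neg at h
        exact hne.1 (hY.eq_of_subset hC h).symm
      obtain ⟨f, hfD, hfY⟩ : ∃ f, f ∈ D ∧ f ∉ Y := by
        by_contra h; push_neg at h
        exact hne.2 (hY.eq_of_subset hD h).symm
      refine hY.dep' ((hskew e heC f hfD).subset ?_)
      intro w hw
      rcases hYsub hw with h | h
      · exact Or.inl ⟨h, fun hh => heY (hh ▸ hw)⟩
      · exact Or.inr ⟨h, fun hh => hfY (hh ▸ hw)⟩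
    by_cases hPemp : M.E \ (C ∪ D) = ∅
    · -- no outside elements
      have hEeq : M.E = C ∪ D :=
        subset_antisymm (by rwa [diff_eq_empty] at hPemp) (union_subset hC.1 hD.1)
      obtain ⟨Z, hZ, hc0Z, hd0Z⟩ := hconn c0 hc0E d0 hd0E hc0d0
      rcases hcross Z hZ (hZ.1.trans hEeq.subset) with rfl | rfl
      · exact (disjoint_left.mp hdisj hd0Z) hd0
      · exact (disjoint_left.mp hdisj hc0) hc0Z
    obtain ⟨x0, hx0P⟩ : (M.E \ (C ∪ D)).Nonempty := nonempty_iff_ne_empty.mpr hPemp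
    by_cases hsame : ∃ x Z, x ∈ M.E \ (C ∪ D) ∧ M.IsCircuit' Z ∧ x ∉ Z ∧
        (Z ∩ C).Nonempty ∧ (Z ∩ D).Nonempty
    · -- SAME case : recurse into the connectivity class of C (avoiding x)
      obtain ⟨x, Z, hxP, hZ, hxZ, ⟨z1, hz1⟩, ⟨z2, hz2⟩⟩ := hsame
      have hxC : x ∉ C := fun h => hxP.2 (Or.inl h)
      have hxD : x ∉ D := fun h => hxP.2 (Or.inr h)
      set γ : α → α → Prop := fun u v => ∃ W, M.IsCircuit' W ∧ x ∉ W ∧ u ∈ W ∧ v ∈ W with hγdef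
      have hγsymm : ∀ u v, γ u v → γ v u := by
        rintro u v ⟨W, h1, h2, h3, h4⟩; exact ⟨W, h1, h2, h4, h3⟩
      have hγtrans : ∀ u v w, γ u v → γ v w → γ u w := by
        rintro u v w ⟨W₁, hW₁, hxW₁, huW₁, hvW₁⟩ ⟨W₂, hW₂, hxW₂, hvW₂, hwW₂⟩
        obtain ⟨Z', hZ', huZ', hwZ', hZ'sub⟩ :=
          circuit_trans hfinE hW₁ hW₂ huW₁ hwW₂ ⟨v, hvW₁, hvW₂⟩
        refine ⟨Z', hZ', fun hx' => ?_, huZ', hwZ'⟩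
        rcases hZ'sub hx' with h | h
        · exact hxW₁ h
        · exact hxW₂ h
      have hγC : ∀ u ∈ C, ∀ v ∈ C, γ u v := fun u hu v hv => ⟨C, hC, hxC, hu, hv⟩
      have hγD : ∀ u ∈ D, ∀ v ∈ D, γ u v := fun u hu v hv => ⟨D, hD, hxD, hu, hv⟩
      have hγZ : ∀ u ∈ Z, ∀ v ∈ Z, γ u v := fun u hu v hv => ⟨Z, hZ, hxZ, hu, hv⟩
      set X : Set α := {y | γ c0 y} with hXdef
      have hCX : C ⊆ X := fun u hu => hγC c0 hc0 u hu
      have hDX : D ⊆ X := by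
        intro f hf
        exact hγtrans _ _ _ (hγtrans _ _ _ (hγtrans _ _ _ (hγC c0 hc0 z1 hz1.2)
          (hγZ z1 hz1.1 z2 hz2.1)) (hγD z2 hz2.2 d0 hd0)) (hγD d0 hd0 f hf)
      have hXE : X ⊆ M.E \ {x} := by
        rintro y ⟨W, hW, hxW, hc0W, hyW⟩
        exact ⟨hW.1 hyW, fun h => hxW (h ▸ hyW)⟩
      have hXE' : X ⊆ M.E := hXE.trans diff_subset
      -- circuits within X stay in X
      have hXclosed : ∀ W, M.IsCircuit' W → x ∉ W → (W ∩ X).Nonempty → W ⊆ X := by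
        rintro W hW hxW ⟨w0, hw0W, hw0X⟩
        intro w hw
        exact hγtrans _ _ _ hw0X ⟨W, hW, hxW, hw0W, hw⟩
      refine ih (M ↾ X) C D ?_ ?_ ?_ ?_ ?_ hdisj ?_ ?_ hcd
      · rw [restrict_ground_eq]; exact hfinE.subset hXE'
      · rw [restrict_ground_eq]
        have h1 : X.ncard ≤ (M.E \ {x}).ncard := Set.ncard_le_ncard hXE (hfinE.diff)
        have h2 : (M.E \ {x}).ncard < M.E.ncard :=
          Set.ncard_diff_singleton_lt_of_mem hxP.1 hfinE
        omega
      · -- connectivity of the restriction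
        intro y hy z hz hyz
        rw [restrict_ground_eq] at hy hz
        have hyc0 : γ y c0 := hγsymm _ _ hy
        obtain ⟨W, hW, hxW, hyW, hzW⟩ := hγtrans _ _ _ hyc0 hz
        refine ⟨W, (restrict_circuit_iff hXE').mpr ⟨hW, ?_⟩, hyW, hzW⟩
        exact hXclosed W hW hxW ⟨y, hyW, hy⟩
      · exact (restrict_circuit_iff hXE').mpr ⟨hC, hCX⟩
      · exact (restrict_circuit_iff hXE').mpr ⟨hD, hDX⟩
      · intro e he f hf
        refine restrict_indep_iff.mpr ⟨hskew e he f hf, ?_⟩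
        exact union_subset (fun w hw => hCX hw.1) (fun w hw => hDX hw.1)
      · intro Y hY
        exact hmax Y ((restrict_circuit_iff hXE').mp hY).1
    · -- DIFF case
      push_neg at hsame
      have hdiff : ∀ x ∈ M.E \ (C ∪ D), ∀ Z, M.IsCircuit' Z → x ∉ Z →
          (Z ∩ C).Nonempty → ¬ (Z ∩ D).Nonempty := by
        intro x hx Z hZ hxZ h1 h2
        rw [hsame x Z hx hZ hxZ h1] at h2
        exact absurd h2 (not_nonempty_empty)
      have hF1 : ∀ Z, M.IsCircuit' Z → (Z ∩ C).Nonempty → (Z ∩ D).Nonempty →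
          M.E \ (C ∪ D) ⊆ Z := by
        intro Z hZ h1 h2 x hx
        by_contra hxZ
        exact hdiff x hx Z hZ hxZ h1 h2
      -- common facts for a fixed outside point x
      have hnoC : ∀ x ∈ M.E \ (C ∪ D), ∀ Y', M.IsCircuit' Y' → x ∈ Y' →
          Y' \ {x} ⊆ C → False := by
        intro x hx Y' hY' hxY' hsubC
        have hxE : x ∈ M.E := hx.1
        have hYne : (Y' \ {x}).Nonempty := by
          by_contra hne
          rw [not_nonempty_iff_eq_empty, diff_eq_empty] at hne
          have : Y' = {x} := subset_antisymm hne (singleton_subset_iff.mpr hxY')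
          exact hY'.dep' (this ▸ hloopless x hxE)
        refine genI hfinE hconn hY' hxY' hYne hd0E (fun h => hx.2 (Or.inr (h ▸ hd0))) ?_ ?_
        · intro hd0Y'
          rcases hsubC ⟨hd0Y', fun h => hx.2 (Or.inr (h ▸ hd0))⟩ with h
          exact (disjoint_left.mp hdisj h) hd0
        · intro B hB hxB hd0B w hwB hwY'
          exact hdiff x hx B hB hxB ⟨w, hwB, hsubC hwY'⟩ ⟨d0, hd0B, hd0⟩
      have hnoD : ∀ x ∈ M.E \ (C ∪ D), ∀ Y', M.IsCircuit' Y' → x ∈ Y' →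
          Y' \ {x} ⊆ D → False := by
        intro x hx Y' hY' hxY' hsubD
        have hxE : x ∈ M.E := hx.1
        have hYne : (Y' \ {x}).Nonempty := by
          by_contra hne
          rw [not_nonempty_iff_eq_empty, diff_eq_empty] at hne
          have : Y' = {x} := subset_antisymm hne (singleton_subset_iff.mpr hxY')
          exact hY'.dep' (this ▸ hloopless x hxE)
        refine genI hfinE hconn hY' hxY' hYne hc0E (fun h => hx.2 (Or.inl (h ▸ hc0))) ?_ ?_
        · intro hc0Y'
          rcases hsubD ⟨hc0Y', fun h => hx.2 (Or.inl (h ▸ hc0))⟩ with h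
          exact (disjoint_left.mp hdisj hc0) h
        · intro B hB hxB hc0B w hwB hwY'
          exact hdiff x hx B hB hxB ⟨c0, hc0B, hc0⟩ ⟨w, hwB, hsubD hwY'⟩
      by_cases hP1 : M.E \ (C ∪ D) = {x0}
      · -- exactly one outside element: combinatorial endgame
        have hxE : x0 ∈ M.E := hx0P.1
        have hxCD : x0 ∉ C ∪ D := hx0P.2
        have hxC : x0 ∉ C := fun h => hxCD (Or.inl h)
        have hxD : x0 ∉ D := fun h => hxCD (Or.inr h)
        have hEsub : ∀ w ∈ M.E, w = x0 ∨ w ∈ C ∪ D := by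
          intro w hw
          by_cases h : w ∈ C ∪ D
          · exact Or.inr h
          · have hmem : w ∈ M.E \ (C ∪ D) := ⟨hw, h⟩
            rw [hP1] at hmem
            exact Or.inl hmem
        have hmeetC : ∀ V, M.IsCircuit' V → x0 ∈ V → (V ∩ C).Nonempty := by
          intro V hV hxV
          by_contra hemp
          rw [not_nonempty_iff_eq_empty] at hemp
          refine hnoD x0 hx0P V hV hxV ?_
          intro w hw
          rcases hEsub w (hV.1 hw.1) with rfl | h
          · exact absurd rfl hw.2
          · rcases h with h | h
            · exact (eq_empty_iff_forall_notMem.mp hemp w ⟨hw.1, h⟩).elim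
            · exact h
        have hmeetD : ∀ V, M.IsCircuit' V → x0 ∈ V → (V ∩ D).Nonempty := by
          intro V hV hxV
          by_contra hemp
          rw [not_nonempty_iff_eq_empty] at hemp
          refine hnoC x0 hx0P V hV hxV ?_
          intro w hw
          rcases hEsub w (hV.1 hw.1) with rfl | h
          · exact absurd rfl hw.2
          · rcases h with h | h
            · exact h
            · exact (eq_empty_iff_forall_notMem.mp hemp w ⟨hw.1, h⟩).elim
        have hWex : ∀ e ∈ C, ∀ f ∈ D, ∃ V, M.IsCircuit' V ∧ x0 ∈ V ∧ e ∉ V ∧ f ∉ V := by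
          intro e he f hf
          obtain ⟨Z₀, hZ₀, hc0Z₀, hd0Z₀⟩ := hconn c0 hc0E d0 hd0E hc0d0
          have hxZ₀ : x0 ∈ Z₀ := hF1 Z₀ hZ₀ ⟨c0, hc0Z₀, hc0⟩ ⟨d0, hd0Z₀, hd0⟩ hx0P
          obtain ⟨K₁, hK₁, hxK₁, heK₁⟩ : ∃ K₁, M.IsCircuit' K₁ ∧ x0 ∈ K₁ ∧ e ∉ K₁ := by
            by_cases heZ₀ : e ∈ Z₀
            · obtain ⟨K, hK, hxK, hKsub⟩ := strong_elimination hfinE hZ₀ hC heZ₀ he hxZ₀ hxC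
              exact ⟨K, hK, hxK, fun h => (hKsub h).2 rfl⟩
            · exact ⟨Z₀, hZ₀, hxZ₀, heZ₀⟩
          by_cases hfK₁ : f ∈ K₁
          · obtain ⟨K₂, hK₂, hxK₂, hK₂sub⟩ := strong_elimination hfinE hK₁ hD hfK₁ hf hxK₁ hxD
            refine ⟨K₂, hK₂, hxK₂, fun h => ?_, fun h => (hK₂sub h).2 rfl⟩
            rcases (hK₂sub h).1 with h' | h'
            · exact heK₁ h'
            · exact (disjoint_left.mp hdisj he) h'
          · exact ⟨K₁, hK₁, hxK₁, heK₁, hfK₁⟩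
        have hP2C : ∀ V₁ V₂, M.IsCircuit' V₁ → M.IsCircuit' V₂ → x0 ∈ V₁ → x0 ∈ V₂ →
            ∀ g, g ∈ V₁ → g ∉ V₂ → g ∈ C → C ⊆ V₁ ∪ V₂ := by
          intro V₁ V₂ h1 h2 hx1 hx2 g hg1 hg2 hgC
          obtain ⟨K, hK, hgK, hKsub⟩ := strong_elimination hfinE h1 h2 hx1 hx2 hg1 hg2
          have hKCD : K ⊆ C ∪ D := by
            intro w hw
            rcases hEsub w (hK.1 hw) with rfl | h
            · exact absurd ((hKsub hw).2) (fun hh => hh rfl)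
            · exact h
          rcases hcross K hK hKCD with rfl | rfl
          · exact (fun w hw => (hKsub hw).1)
          · exact absurd hgC (disjoint_right.mp hdisj hgK)
        have hP2D : ∀ V₁ V₂, M.IsCircuit' V₁ → M.IsCircuit' V₂ → x0 ∈ V₁ → x0 ∈ V₂ →
            ∀ g, g ∈ V₁ → g ∉ V₂ → g ∈ D → D ⊆ V₁ ∪ V₂ := by
          intro V₁ V₂ h1 h2 hx1 hx2 g hg1 hg2 hgD
          obtain ⟨K, hK, hgK, hKsub⟩ := strong_elimination hfinE h1 h2 hx1 hx2 hg1 hg2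
          have hKCD : K ⊆ C ∪ D := by
            intro w hw
            rcases hEsub w (hK.1 hw) with rfl | h
            · exact absurd ((hKsub hw).2) (fun hh => hh rfl)
            · exact h
          rcases hcross K hK hKCD with rfl | rfl
          · exact absurd hgD (disjoint_left.mp hdisj hgK)
          · exact (fun w hw => (hKsub hw).1)
        have hnotboth : ∀ V₁ V₂, M.IsCircuit' V₁ → M.IsCircuit' V₂ → x0 ∈ V₁ → x0 ∈ V₂ →
            C ⊆ V₁ ∪ V₂ → D ⊆ V₁ ∪ V₂ → False := by
          intro V₁ V₂ h1 h2 hx1 hx2 hCsub hDsub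
          have hV₁fin : V₁.Finite := hfinE.subset h1.1
          have hV₂fin : V₂.Finite := hfinE.subset h2.1
          have hsum : (V₁ ∪ V₂).ncard + (V₁ ∩ V₂).ncard = V₁.ncard + V₂.ncard :=
            Set.ncard_union_add_ncard_inter V₁ V₂ hV₁fin hV₂fin
          have hbig : (insert x0 (C ∪ D)).ncard ≤ (V₁ ∪ V₂).ncard :=
            Set.ncard_le_ncard (insert_subset (Or.inl hx1) (union_subset hCsub hDsub))
              (hV₁fin.union hV₂fin)
          have hCD : (C ∪ D).ncard = C.ncard + D.ncard :=
            Set.ncard_union_eq hdisj hCfin hDfin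
          have hins : (insert x0 (C ∪ D)).ncard = (C ∪ D).ncard + 1 :=
            Set.ncard_insert_of_notMem hxCD (hCfin.union hDfin)
          have hx12 : 1 ≤ (V₁ ∩ V₂).ncard := by
            rw [Nat.one_le_iff_ne_zero, Ne, Set.ncard_eq_zero (hV₁fin.inter_of_left _)]
            exact fun h => (eq_empty_iff_forall_notMem.mp h x0 ⟨hx1, hx2⟩)
          have hm1 := hmax V₁ h1
          have hm2 := hmax V₂ h2
          omega
        have heqorC : ∀ V₁ V₂, M.IsCircuit' V₁ → M.IsCircuit' V₂ → x0 ∈ V₁ → x0 ∈ V₂ →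
            ¬ C ⊆ V₁ ∪ V₂ → V₁ ∩ C = V₂ ∩ C := by
          intro V₁ V₂ h1 h2 hx1 hx2 hnsub
          apply subset_antisymm
          · rintro w ⟨hw1, hwC⟩
            by_contra hw2
            have hw2' : w ∉ V₂ := fun h => hw2 ⟨h, hwC⟩
            exact hnsub (hP2C V₁ V₂ h1 h2 hx1 hx2 w hw1 hw2' hwC)
          · rintro w ⟨hw2, hwC⟩
            by_contra hw1
            have hw1' : w ∉ V₁ := fun h => hw1 ⟨h, hwC⟩
            exact hnsub (by
              have := hP2C V₂ V₁ h2 h1 hx2 hx1 w hw2 hw1' hwC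
              rwa [union_comm] at this)
        have heqorD : ∀ V₁ V₂, M.IsCircuit' V₁ → M.IsCircuit' V₂ → x0 ∈ V₁ → x0 ∈ V₂ →
            ¬ D ⊆ V₁ ∪ V₂ → V₁ ∩ D = V₂ ∩ D := by
          intro V₁ V₂ h1 h2 hx1 hx2 hnsub
          apply subset_antisymm
          · rintro w ⟨hw1, hwD⟩
            by_contra hw2
            have hw2' : w ∉ V₂ := fun h => hw2 ⟨h, hwD⟩
            exact hnsub (hP2D V₁ V₂ h1 h2 hx1 hx2 w hw1 hw2' hwD)
          · rintro w ⟨hw2, hwD⟩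
            by_contra hw1
            have hw1' : w ∉ V₁ := fun h => hw1 ⟨h, hwD⟩
            exact hnsub (by
              have := hP2D V₂ V₁ h2 h1 hx2 hx1 w hw2 hw1' hwD
              rwa [union_comm] at this)
        -- the finale
        obtain ⟨V₀, hV₀, hxV₀, hc0V₀, hd0V₀⟩ := hWex c0 hc0 d0 hd0
        obtain ⟨a, haV₀, haC⟩ := hmeetC V₀ hV₀ hxV₀
        obtain ⟨V', hV', hxV', haV', hd0V'⟩ := hWex a haC d0 hd0
        have hCun : C ⊆ V₀ ∪ V' := hP2C V₀ V' hV₀ hV' hxV₀ hxV' a haV₀ haV' haC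
        have hDeq : V₀ ∩ D = V' ∩ D :=
          heqorD V₀ V' hV₀ hV' hxV₀ hxV'
            (fun h => hnotboth V₀ V' hV₀ hV' hxV₀ hxV' hCun h)
        obtain ⟨fb, hfbV₀, hfbD⟩ := hmeetD V₀ hV₀ hxV₀
        obtain ⟨V₃, hV₃, hxV₃, hc0V₃, hfbV₃⟩ := hWex c0 hc0 fb hfbD
        have hDun1 : D ⊆ V₀ ∪ V₃ := hP2D V₀ V₃ hV₀ hV₃ hxV₀ hxV₃ fb hfbV₀ hfbV₃ hfbD
        have hCeq1 : V₀ ∩ C = V₃ ∩ C :=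
          heqorC V₀ V₃ hV₀ hV₃ hxV₀ hxV₃
            (fun h => hnotboth V₀ V₃ hV₀ hV₃ hxV₀ hxV₃ h hDun1)
        have hfbV' : fb ∈ V' := by
          have hmem : fb ∈ V' ∩ D := hDeq ▸ (⟨hfbV₀, hfbD⟩ : fb ∈ V₀ ∩ D)
          exact hmem.1
        have hDun2 : D ⊆ V' ∪ V₃ := hP2D V' V₃ hV' hV₃ hxV' hxV₃ fb hfbV' hfbV₃ hfbD
        have hCeq2 : V' ∩ C = V₃ ∩ C :=
          heqorC V' V₃ hV' hV₃ hxV' hxV₃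
            (fun h => hnotboth V' V₃ hV' hV₃ hxV' hxV₃ h hDun2)
        have haV'2 : a ∈ V' := by
          have h1 : a ∈ V₀ ∩ C := ⟨haV₀, haC⟩
          rw [hCeq1, ← hCeq2] at h1
          exact h1.1
        exact haV' haV'2
      · -- at least two outside elements: contract x0 and recurse
        obtain ⟨x', hx'P, hx'ne⟩ : ∃ x', x' ∈ M.E \ (C ∪ D) ∧ x' ≠ x0 := by
          by_contra h
          push_neg at h
          exact hP1 (subset_antisymm (fun w hw => h w hw)
            (fun w hw => (mem_singleton_iff.mp hw) ▸ hx0P))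
        have hxE : x0 ∈ M.E := hx0P.1
        have hxC : x0 ∉ C := fun h => hx0P.2 (Or.inl h)
        have hxD : x0 ∉ D := fun h => hx0P.2 (Or.inr h)
        have hxi : M.Indep {x0} := hloopless x0 hxE
        have hg' : (M.contract' {x0}).E = M.E \ {x0} := contract'_ground' M {x0}
        have hsingSub : ∀ {Y : Set α}, M.IsCircuit' Y → x0 ∈ Y → (Y \ {x0}).Nonempty := by
          intro Y hY hxY
          by_contra hne
          rw [not_nonempty_iff_eq_empty, diff_eq_empty] at hne
          exact hY.dep' ((subset_antisymm hne (singleton_subset_iff.mpr hxY)) ▸ hxi)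
        have hkey : ∀ S : Set α, S ⊆ M.E → x0 ∉ S → M.Indep S →
            (∀ Y', M.IsCircuit' Y' → x0 ∈ Y' → Y' \ {x0} ⊆ S → False) →
            M.Indep (insert x0 S) := by
          intro S hSE hxS hSind hno
          by_contra hdep
          obtain ⟨Y', hY', hY'sub⟩ := exists_circuit_subset
            (hfinE.subset (insert_subset hxE hSE)) (insert_subset hxE hSE) hdep
          have hxY' : x0 ∈ Y' := by
            by_contra hxY'
            refine hY'.dep' (hSind.subset (fun w hw => ?_))
            rcases hY'sub hw with rfl | h
            · exact absurd hw hxY'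
            · exact h
          refine hno Y' hY' hxY' (fun w hw => ?_)
          rcases hY'sub hw.1 with rfl | h
          · exact absurd rfl hw.2
          · exact h
        have hC' : (M.contract' {x0}).IsCircuit' C := by
          have hCsub : C ⊆ M.E \ {x0} := fun w hw => ⟨hC.1 hw, fun h => hxC (h ▸ hw)⟩
          refine ⟨by rw [hg']; exact hCsub, ?_, ?_⟩
          · exact contract'_singleton_dep hxE hxi hCsub
              (fun hind => hC.dep' (hind.subset (subset_insert _ _)))
          · intro S hS
            rw [contract'_singleton_indep_iff hxE hxi]
            have hSC : S ⊆ C := hS.subset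
            refine ⟨fun w hw => hCsub (hSC hw), ?_⟩
            refine hkey S (hSC.trans hC.1) (fun h => hxC (hSC h)) (hC.ssubset_indep hS) ?_
            intro Y' hY' hxY' hsub
            exact hnoC x0 hx0P Y' hY' hxY' (hsub.trans hSC)
        have hD' : (M.contract' {x0}).IsCircuit' D := by
          have hDsub : D ⊆ M.E \ {x0} := fun w hw => ⟨hD.1 hw, fun h => hxD (h ▸ hw)⟩
          refine ⟨by rw [hg']; exact hDsub, ?_, ?_⟩
          · exact contract'_singleton_dep hxE hxi hDsub
              (fun hind => hD.dep' (hind.subset (subset_insert _ _)))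
          · intro S hS
            rw [contract'_singleton_indep_iff hxE hxi]
            have hSD : S ⊆ D := hS.subset
            refine ⟨fun w hw => hDsub (hSD hw), ?_⟩
            refine hkey S (hSD.trans hD.1) (fun h => hxD (hSD h)) (hD.ssubset_indep hS) ?_
            intro Y' hY' hxY' hsub
            exact hnoD x0 hx0P Y' hY' hxY' (hsub.trans hSD)
        have hskew' : ∀ e ∈ C, ∀ f ∈ D, (M.contract' {x0}).Indep ((C \ {e}) ∪ (D \ {f})) := by
          intro e he f hf
          rw [contract'_singleton_indep_iff hxE hxi]
          set S := (C \ {e}) ∪ (D \ {f}) with hSdef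
          have hSsub : S ⊆ C ∪ D :=
            union_subset (diff_subset.trans subset_union_left)
              (diff_subset.trans subset_union_right)
          have hSE : S ⊆ M.E := hSsub.trans (union_subset hC.1 hD.1)
          have hxS : x0 ∉ S := fun h => hx0P.2 (hSsub h)
          refine ⟨fun w hw => ⟨hSE hw, fun h => hxS (h ▸ hw)⟩, ?_⟩
          refine hkey S hSE hxS (hskew e he f hf) ?_
          intro Y' hY' hxY' hsub
          by_cases hYD : (Y' ∩ D).Nonempty
          · by_cases hYC : (Y' ∩ C).Nonempty
            · have hx'Y' := hF1 Y' hY' hYC hYD hx'P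
              have hx'S : x' ∈ S := hsub ⟨hx'Y', hx'ne⟩
              exact hx'P.2 (hSsub hx'S)
            · refine hnoD x0 hx0P Y' hY' hxY' ?_
              intro w hw
              rcases hSsub (hsub hw) with h | h
              · exact absurd ⟨hw.1, h⟩ (fun hh => hYC ⟨w, hh⟩)
              · exact h
          · refine hnoC x0 hx0P Y' hY' hxY' ?_
            intro w hw
            rcases hSsub (hsub hw) with h | h
            · exact h
            · exact absurd ⟨hw.1, h⟩ (fun hh => hYD ⟨w, hh⟩)
        have hconn' : (M.contract' {x0}).Connected' := by
          intro y hy z hz hyz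
          rw [hg'] at hy hz
          obtain ⟨Zyz, hZyz, hyZ, hzZ⟩ := hconn y hy.1 z hz.1 hyz
          by_cases hxZ : x0 ∈ Zyz
          · refine ⟨Zyz \ {x0}, circuit_contract_of_mem hxE hxi hZyz hxZ ?_,
              ⟨hyZ, hy.2⟩, ⟨hzZ, hz.2⟩⟩
            intro h
            exact hy.2 (by rw [h] at hyZ; exact hyZ)
          · have hZsub : Zyz ⊆ M.E \ {x0} := fun w hw => ⟨hZyz.1 hw, fun h => hxZ (h ▸ hw)⟩
            refine ⟨Zyz, ⟨by rw [hg']; exact hZsub, ?_, ?_⟩, hyZ, hzZ⟩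
            · exact contract'_singleton_dep hxE hxi hZsub
                (fun hind => hZyz.dep' (hind.subset (subset_insert _ _)))
            · intro S hS
              rw [contract'_singleton_indep_iff hxE hxi]
              have hSZ : S ⊆ Zyz := hS.subset
              have hSE : S ⊆ M.E := hSZ.trans hZyz.1
              have hxS : x0 ∉ S := fun h => hxZ (hSZ h)
              refine ⟨fun w hw => ⟨hSE hw, fun h => hxS (h ▸ hw)⟩, ?_⟩
              refine hkey S hSE hxS (hZyz.ssubset_indep hS) ?_
              intro Y' hY' hxY' hsub
              have hsubZ : Y' \ {x0} ⊆ Zyz := hsub.trans hSZ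
              by_cases hJd : d0 ∈ Zyz ∨
                  ∃ B, M.IsCircuit' B ∧ x0 ∉ B ∧ d0 ∈ B ∧ (B ∩ Zyz).Nonempty
              · have hfree : ∀ B, M.IsCircuit' B → x0 ∉ B → c0 ∈ B →
                    (B ∩ Zyz).Nonempty → False := by
                  rintro B hB hxB hc0B ⟨w, hwB, hwZ⟩
                  rcases hJd with hd0Z | ⟨B', hB', hxB', hd0B', w', hw'B', hw'Z⟩
                  · obtain ⟨Zst, hZst, hc0Zst, hd0Zst, hZstsub⟩ :=
                      circuit_trans hfinE hB hZyz hc0B hd0Z ⟨w, hwB, hwZ⟩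
                    exact hdiff x0 hx0P Zst hZst (fun hh => (hZstsub hh).elim hxB hxZ)
                      ⟨c0, hc0Zst, hc0⟩ ⟨d0, hd0Zst, hd0⟩
                  · obtain ⟨Z₁, hZ₁, hc0Z₁, hw'Z₁, hZ₁sub⟩ :=
                      circuit_trans hfinE hB hZyz hc0B hw'Z ⟨w, hwB, hwZ⟩
                    obtain ⟨Z₂, hZ₂, hc0Z₂, hd0Z₂, hZ₂sub⟩ :=
                      circuit_trans hfinE hZ₁ hB' hc0Z₁ hd0B' ⟨w', hw'Z₁, hw'B'⟩
                    have hxZ₂ : x0 ∉ Z₂ := fun hh =>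
                      (hZ₂sub hh).elim (fun h2 => (hZ₁sub h2).elim hxB hxZ) hxB'
                    exact hdiff x0 hx0P Z₂ hZ₂ hxZ₂ ⟨c0, hc0Z₂, hc0⟩ ⟨d0, hd0Z₂, hd0⟩
                have hc0Zyz : c0 ∉ Zyz := by
                  intro hc0Z
                  rcases hJd with hd0Z | ⟨B', hB', hxB', hd0B', w', hw'B', hw'Z⟩
                  · exact hdiff x0 hx0P Zyz hZyz hxZ ⟨c0, hc0Z, hc0⟩ ⟨d0, hd0Z, hd0⟩
                  · obtain ⟨Z₂, hZ₂, hc0Z₂, hd0Z₂, hZ₂sub⟩ :=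
                      circuit_trans hfinE hZyz hB' hc0Z hd0B' ⟨w', hw'Z, hw'B'⟩
                    exact hdiff x0 hx0P Z₂ hZ₂ (fun hh => (hZ₂sub hh).elim hxZ hxB')
                      ⟨c0, hc0Z₂, hc0⟩ ⟨d0, hd0Z₂, hd0⟩
                refine genI hfinE hconn hY' hxY' (hsingSub hY' hxY') hc0E
                  (fun h => hxC (h ▸ hc0)) ?_ ?_
                · intro hc0Y'
                  exact hc0Zyz (hsubZ ⟨hc0Y', fun h => hxC (h ▸ hc0)⟩)
                · intro B hB hxB hc0B w hwB hwY'
                  exact hfree B hB hxB hc0B ⟨w, hwB, hsubZ hwY'⟩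
              · push_neg at hJd
                refine genI hfinE hconn hY' hxY' (hsingSub hY' hxY') hd0E
                  (fun h => hxD (h ▸ hd0)) ?_ ?_
                · intro hd0Y'
                  exact hJd.1 (hsubZ ⟨hd0Y', fun h => hxD (h ▸ hd0)⟩)
                · intro B hB hxB hd0B w hwB hwY'
                  exact eq_empty_iff_forall_notMem.mp (hJd.2 B hB hxB hd0B) w
                    ⟨hwB, hsubZ hwY'⟩
        have hmax' : ∀ I, (M.contract' {x0}).IsCircuit' I → I.ncard ≤ C.ncard := by
          intro I hI
          obtain ⟨Y, hY, hIY, hYsub⟩ := circuit_contract_lift hfinE hxE hxi hI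
          exact le_trans (Set.ncard_le_ncard hIY (hfinE.subset hY.1)) (hmax Y hY)
        refine ih (M.contract' {x0}) C D ?_ ?_ hconn' hC' hD' hdisj hskew' hmax' hcd
        · rw [hg']; exact hfinE.diff
        · rw [hg']
          have := Set.ncard_diff_singleton_lt_of_mem hxE hfinE
          omega

end Matroid

theorem seymour_max_circuit_contract (M : Matroid α) [M.Finite]
    (hLoopless : M.Loopless') (hConn : M.Connected') (hcard : 1 < M.E.ncard)
    (C : Set α) (hC : M.IsCircuit' C)
    (hCmax : ∀ C', M.IsCircuit' C' → C'.ncard ≤ C.ncard) :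
    ∀ C', (M.contract' C).IsCircuit' C' → C'.ncard < C.ncard := by
  intro D hD
  have hfinE : M.E.Finite := M.ground_finite
  have hCE : C ⊆ M.E := hC.1
  have hDsub : D ⊆ M.E \ C := by rw [← contract'_ground']; exact hD.1
  obtain ⟨g0, hg0⟩ := hC.nonempty
  have hbasisC : ∀ g ∈ C, M.IsBasis (C \ {g}) C := by
    intro g hg
    refine (hC.diff_singleton_indep hg).isBasis_of_subset_of_subset_closure diff_subset ?_
    intro w hw
    by_cases hwg : w = g
    · subst hwg; exact hC.mem_closure_diff_singleton hw
    · exact M.mem_closure_of_mem ⟨hw, hwg⟩ (diff_subset.trans hCE)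
  have hdep : ¬ M.Indep (D ∪ (C \ {g0})) := by
    intro hind
    refine hD.dep' ?_
    rw [contract'_indep_iff hCE]
    exact ⟨hDsub, C \ {g0}, hbasisC g0 hg0, hind⟩
  have hUE : D ∪ (C \ {g0}) ⊆ M.E :=
    union_subset (hDsub.trans diff_subset) (diff_subset.trans hCE)
  obtain ⟨X₀, hX₀, hX₀sub⟩ := exists_circuit_subset (hfinE.subset hUE) hUE hdep
  have hDX₀ : D ⊆ X₀ := by
    have hX₀D_dep : ¬ (M.contract' C).Indep (X₀ ∩ D) := by
      intro hind
      rw [contract'_indep_iff_forall hfinE hCE] at hind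
      have hind2 := hind.2 (C \ {g0}) (hbasisC g0 hg0)
      refine hX₀.dep' (hind2.subset ?_)
      intro w hw
      rcases hX₀sub hw with h | h
      · exact Or.inl ⟨hw, h⟩
      · exact Or.inr h
    by_contra hnsub
    have hne : X₀ ∩ D ≠ D := fun h => hnsub (fun w hw => ((h.symm ▸ hw) : w ∈ X₀ ∩ D).1)
    exact hX₀D_dep (hD.ssubset_indep (ssubset_of_subset_of_ne inter_subset_right hne))
  by_cases heq : X₀ = D
  · by_contra hlt
    push_neg at hlt
    have hDcirc : M.IsCircuit' D := heq ▸ hX₀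
    have hdisj : Disjoint C D := disjoint_left.mpr (fun {w} hwC hwD => (hDsub hwD).2 hwC)
    have hskew : ∀ e ∈ C, ∀ f ∈ D, M.Indep ((C \ {e}) ∪ (D \ {f})) := by
      intro e he f hf
      have hind : (M.contract' C).Indep (D \ {f}) :=
        hD.ssubset_indep (sdiff_singleton_ssubset.mpr hf)
      rw [contract'_indep_iff_forall hfinE hCE] at hind
      have h2 := hind.2 (C \ {e}) (hbasisC e he)
      rwa [union_comm] at h2
    exact no_skew_pair M.E.ncard M C D hfinE le_rfl hConn hC hDcirc hdisj hskew hCmax hlt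
  · have hssub : D ⊂ X₀ := ssubset_of_subset_of_ne hDX₀ (fun h => heq h.symm)
    have h1 : D.ncard < X₀.ncard := Set.ncard_lt_ncard hssub (hfinE.subset hX₀.1)
    exact lt_of_lt_of_le h1 (hCmax X₀ hX₀)
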